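/- Let H ∈ (1/2, 1), T > 0, t ∈ (0,T), and let B = (B_s)_{s ∈ [0,T]} be a process of square-integrable real random variables such that every finite family (B_{s₁},…,B_{sₙ}) has a centered jointly Gaussian law with E[B_s B_u] = R_H(s,u). Then Var(E[(B_t − B_{t−h})/h | σ(B_t, B_{t+h})]) tends to +∞ as h → 0 from the right. -/

import Mathlib

open MeasureTheory ProbabilityTheory Filter Set
open scoped Topology NNReal

noncomputable section

/-- A measure on a real normed space is a centered Gaussian measure if every continuous
linear functional pushes it forward to a centered one-dimensional Gaussian measure. -/
def IsCenteredGaussian {E : Type*} [NormedAddCommGroup E] [NormedSpace ℝ E]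
    [MeasurableSpace E] (μ : MeasureTheory.Measure E) : Prop :=
  ∀ L : E →L[ℝ] ℝ, ∃ v : ℝ≥0, μ.map L = ProbabilityTheory.gaussianReal 0 v

section Aux

variable {Ω : Type*} [m0 : MeasurableSpace Ω] {P : Measure Ω}

lemma aux_integrable_mul {f g : Ω → ℝ} (hf : MemLp f 2 P) (hg : MemLp g 2 P) :
    Integrable (fun ω => f ω * g ω) P := by
  have h : MemLp (f • g) 1 P := by
    haveI : ENNReal.HolderTriple 2 2 1 := ⟨by simp [ENNReal.inv_two_add_inv_two]⟩
    exact hg.smul hf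
  exact memLp_one_iff_integrable.mp h

lemma aux_cauchy_schwarz {f g : Ω → ℝ} (hf : MemLp f 2 P) (hg : MemLp g 2 P) :
    (∫ ω, f ω * g ω ∂P) ^ 2 ≤ (∫ ω, f ω * f ω ∂P) * (∫ ω, g ω * g ω ∂P) := by
  set F := hf.toLp f with hF
  set G := hg.toLp g with hG
  have hFG : (inner ℝ F G : ℝ) = ∫ ω, f ω * g ω ∂P := by
    rw [MeasureTheory.L2.inner_def]
    refine integral_congr_ae ?_
    filter_upwards [hf.coeFn_toLp, hg.coeFn_toLp] with ω h1 h2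
    simp [hF, hG, h1, h2, RCLike.inner_apply, starRingEnd_apply, mul_comm]
  have hFF : (inner ℝ F F : ℝ) = ∫ ω, f ω * f ω ∂P := by
    rw [MeasureTheory.L2.inner_def]
    refine integral_congr_ae ?_
    filter_upwards [hf.coeFn_toLp] with ω h1
    simp [hF, h1, RCLike.inner_apply, starRingEnd_apply, sq]
  have hGG : (inner ℝ G G : ℝ) = ∫ ω, g ω * g ω ∂P := by
    rw [MeasureTheory.L2.inner_def]
    refine integral_congr_ae ?_
    filter_upwards [hg.coeFn_toLp] with ω h1
    simp [hG, h1, RCLike.inner_apply, starRingEnd_apply, sq]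
  calc (∫ ω, f ω * g ω ∂P) ^ 2 = (inner ℝ F G : ℝ) * (inner ℝ F G : ℝ) := by rw [hFG, sq]
    _ ≤ (inner ℝ F F : ℝ) * (inner ℝ G G : ℝ) := real_inner_mul_inner_self_le F G
    _ = (∫ ω, f ω * f ω ∂P) * (∫ ω, g ω * g ω ∂P) := by rw [hFF, hGG]

end Aux

lemma aux_memℒp_condexp {Ω : Type*} {m : MeasurableSpace Ω} [m0 : MeasurableSpace Ω]
    {P : Measure Ω} [IsProbabilityMeasure P] (hm : m ≤ m0)
    {X : Ω → ℝ} (hX : MemLp X 2 P) : MemLp (P[X|m]) 2 P := by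
  have hgmem : MemLp ((condExpL2 ℝ ℝ hm (hX.toLp X) : Lp ℝ 2 P) : Ω → ℝ) 2 P :=
    Lp.memLp (condExpL2 ℝ ℝ hm (hX.toLp X) : Lp ℝ 2 P)
  have hgint : Integrable ((condExpL2 ℝ ℝ hm (hX.toLp X) : Lp ℝ 2 P) : Ω → ℝ) P :=
    hgmem.integrable one_le_two
  have hae : ((condExpL2 ℝ ℝ hm (hX.toLp X) : Lp ℝ 2 P) : Ω → ℝ) =ᵐ[P] P[X|m] := by
    refine ae_eq_condExp_of_forall_setIntegral_eq hm (hX.integrable one_le_two) ?_ ?_ ?_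
    · intro s _ _
      exact hgint.integrableOn
    · intro s hs hμs
      rw [integral_condExpL2_eq hm (hX.toLp X) hs hμs.ne]
      exact setIntegral_congr_ae (hm s hs) (hX.coeFn_toLp.mono fun ω hω _ => hω)
    · exact aestronglyMeasurable_condExpL2 hm _
  exact hgmem.ae_eq hae

/-- The main quantitative step in the proof of Proposition 13: for fractional Brownian
motion with `H > 1/2`, `Var(E[(B_t - B_(t-h))/h | σ(B_t, B_(t+h))]) → +∞` as `h ↓ 0`. -/
theorem fbm_two_point_regression_variance_diverges
    {Ω : Type*} [MeasurableSpace Ω] (P : Measure Ω) [IsProbabilityMeasure P]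
    (H T : ℝ) (hH : H ∈ Set.Ioo (1/2 : ℝ) 1) (hT : 0 < T) (t : ℝ) (ht : t ∈ Set.Ioo 0 T)
    (B : ℝ → Ω → ℝ) (hBm : ∀ s, Measurable (B s))
    (hB2 : ∀ s ∈ Set.Icc 0 T, MemLp (B s) 2 P)
    (hG : ∀ (n : ℕ) (s : Fin n → ℝ), (∀ i, s i ∈ Set.Icc 0 T) →
      IsCenteredGaussian (P.map (fun ω => fun i => B (s i) ω)))
    (hcov : ∀ s ∈ Set.Icc 0 T, ∀ u ∈ Set.Icc 0 T,
      ∫ ω, B s ω * B u ω ∂P = (s ^ (2*H) + u ^ (2*H) - |s - u| ^ (2*H)) / 2) :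
    Filter.Tendsto
      (fun h : ℝ => variance
        (P[fun ω => (B t ω - B (t - h) ω) / h |
          MeasurableSpace.comap (fun ω => (B t ω, B (t + h) ω)) inferInstance]) P)
      (𝓝[>] 0) Filter.atTop := by
  obtain ⟨hH1, hH2⟩ := hH
  obtain ⟨ht0, htT⟩ := ht
  have h2H1 : (1:ℝ) < 2*H := by linarith
  have h2H2 : 2*H < 2 := by linarith
  have h2Hne : (2*H : ℝ) ≠ 0 := by positivity
  set c : ℝ := ((2:ℝ) ^ (2*H) - 2) / 2 with hc_def
  have hc : 0 < c := by
    have h1 : (2:ℝ) ^ (1:ℝ) < (2:ℝ) ^ (2*H) :=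
      Real.rpow_lt_rpow_left_iff (by norm_num) |>.mpr h2H1
    rw [Real.rpow_one] at h1
    rw [hc_def]; linarith
  -- centered
  have hmean : ∀ s ∈ Set.Icc (0:ℝ) T, ∫ ω, B s ω ∂P = 0 := by
    intro s hs
    obtain ⟨v, hv⟩ := hG 1 (fun _ => s) (fun _ => hs)
      (ContinuousLinearMap.proj (R := ℝ) (φ := fun _ : Fin 1 => ℝ) 0)
    have hF : Measurable (fun ω => fun _ : Fin 1 => B s ω) :=
      measurable_pi_lambda _ fun _ => hBm s
    have hmap : P.map (B s) = gaussianReal 0 v := by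
      rw [← hv, Measure.map_map (ContinuousLinearMap.proj (R := ℝ)
        (φ := fun _ : Fin 1 => ℝ) 0).continuous.measurable hF]
      rfl
    have hsymm : (gaussianReal 0 v).map (fun x => -x) = gaussianReal 0 v := by
      have h1 := gaussianReal_map_const_mul (μ := 0) (v := v) (-1)
      have h2 : ((-1 : ℝ) * ·) = (fun x : ℝ => -x) := by funext x; ring
      rw [h2] at h1
      have h4 : (.mk ((-1:ℝ)^2) (sq_nonneg _) : ℝ≥0) = 1 := by ext; norm_num
      rw [h1, h4]
      norm_num
    have e2 : ∫ x, x ∂(gaussianReal 0 v) = 0 := by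
      have h5 := integral_map (μ := gaussianReal 0 v) (φ := fun x : ℝ => -x)
        measurable_neg.aemeasurable (f := id) aestronglyMeasurable_id
      simp only [id_eq] at h5
      rw [hsymm] at h5
      rw [integral_neg] at h5
      linarith
    have e1 : ∫ ω, B s ω ∂P = ∫ x, x ∂(P.map (B s)) :=
      (integral_map (hBm s).aemeasurable aestronglyMeasurable_id).symm
    rw [e1, hmap, e2]
  -- the key pointwise lower bound
  have key : ∀ h : ℝ, h ∈ Set.Ioo (0:ℝ) (min t (T - t)) →
      c^2 * h^(2*H) / h^2 ≤ variance
        (P[fun ω => (B t ω - B (t - h) ω) / h |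
          MeasurableSpace.comap (fun ω => (B t ω, B (t + h) ω)) inferInstance]) P := by
    intro h hh
    obtain ⟨hh0, hhlt⟩ := hh
    have hht : h < t := lt_of_lt_of_le hhlt (min_le_left _ _)
    have hhT : h < T - t := lt_of_lt_of_le hhlt (min_le_right _ _)
    have hhne : h ≠ 0 := ne_of_gt hh0
    have hmemA : (t - h) ∈ Set.Icc (0:ℝ) T := ⟨by linarith, by linarith⟩
    have hmemB : t ∈ Set.Icc (0:ℝ) T := ⟨le_of_lt ht0, le_of_lt htT⟩
    have hmemD : (t + h) ∈ Set.Icc (0:ℝ) T := ⟨by linarith, by linarith⟩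
    have hA2 := hB2 _ hmemA
    have hB2' := hB2 _ hmemB
    have hD2 := hB2 _ hmemD
    have hm : MeasurableSpace.comap (fun ω => (B t ω, B (t + h) ω)) inferInstance ≤
        (by infer_instance : MeasurableSpace Ω) :=
      Measurable.comap_le ((hBm t).prodMk (hBm (t + h)))
    set X : Ω → ℝ := fun ω => (B t ω - B (t - h) ω) / h with hX_def
    set Z : Ω → ℝ := fun ω => B (t + h) ω - B t ω with hZ_def
    have hX2 : MemLp X 2 P := by
      have h1 : MemLp (fun ω => B t ω - B (t - h) ω) 2 P := hB2'.sub hA2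
      have h2 := h1.const_mul h⁻¹
      refine h2.ae_eq (Eventually.of_forall fun ω => ?_)
      simp [hX_def, div_eq_inv_mul]
    have hZ2 : MemLp Z 2 P := hD2.sub hB2'
    have hZm : StronglyMeasurable[
        MeasurableSpace.comap (fun ω => (B t ω, B (t + h) ω)) inferInstance] Z := by
      have hp : @Measurable Ω (ℝ × ℝ)
          (MeasurableSpace.comap (fun ω => (B t ω, B (t + h) ω)) inferInstance) _
          (fun ω => (B t ω, B (t + h) ω)) :=
        Measurable.of_comap_le le_rfl
      exact ((measurable_snd.sub measurable_fst).comp hp).stronglyMeasurable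
    have hXint : Integrable X P := hX2.integrable one_le_two
    have hf2 : MemLp
        (P[X|MeasurableSpace.comap (fun ω => (B t ω, B (t + h) ω)) inferInstance]) 2 P :=
      aux_memℒp_condexp hm hX2
    -- mean of X is zero
    have hXmean : ∫ ω, X ω ∂P = 0 := by
      simp only [hX_def]
      rw [integral_div, integral_sub (hB2'.integrable one_le_two) (hA2.integrable one_le_two),
        hmean _ hmemB, hmean _ hmemA]
      simp
    -- covariance values
    have habs1 : |t - (t + h)| = h := by rw [abs_of_nonpos (by linarith)]; ring
    have habs2 : |t + h - t| = h := by rw [abs_of_nonneg (by linarith)]; ring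
    have habs3 : |t - h - (t + h)| = 2*h := by rw [abs_of_nonpos (by linarith)]; ring
    have habs4 : |t - h - t| = h := by rw [abs_of_nonpos (by linarith)]; ring
    have hbd : ∫ ω, B t ω * B (t + h) ω ∂P
        = (t^(2*H) + (t+h)^(2*H) - h^(2*H)) / 2 := by
      rw [hcov _ hmemB _ hmemD, habs1]
    have hbb : ∫ ω, B t ω * B t ω ∂P = t^(2*H) := by
      rw [hcov _ hmemB _ hmemB, sub_self, abs_zero, Real.zero_rpow h2Hne]
      ring
    have hdd : ∫ ω, B (t + h) ω * B (t + h) ω ∂P = (t+h)^(2*H) := by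
      rw [hcov _ hmemD _ hmemD, sub_self, abs_zero, Real.zero_rpow h2Hne]
      ring
    have hdb : ∫ ω, B (t + h) ω * B t ω ∂P
        = (t^(2*H) + (t+h)^(2*H) - h^(2*H)) / 2 := by
      rw [hcov _ hmemD _ hmemB, habs2]; ring
    have had : ∫ ω, B (t - h) ω * B (t + h) ω ∂P
        = ((t-h)^(2*H) + (t+h)^(2*H) - (2*h)^(2*H)) / 2 := by
      rw [hcov _ hmemA _ hmemD, habs3]
    have hab : ∫ ω, B (t - h) ω * B t ω ∂P
        = ((t-h)^(2*H) + t^(2*H) - h^(2*H)) / 2 := by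
      rw [hcov _ hmemA _ hmemB, habs4]
    have h2h : (2*h)^(2*H) = 2^(2*H) * h^(2*H) :=
      Real.mul_rpow (by norm_num) (le_of_lt hh0)
    -- integrable products
    have iBD : Integrable (fun ω => B t ω * B (t + h) ω) P := aux_integrable_mul hB2' hD2
    have iBB : Integrable (fun ω => B t ω * B t ω) P := aux_integrable_mul hB2' hB2'
    have iDD : Integrable (fun ω => B (t + h) ω * B (t + h) ω) P := aux_integrable_mul hD2 hD2
    have iDB : Integrable (fun ω => B (t + h) ω * B t ω) P := aux_integrable_mul hD2 hB2'
    have iAD : Integrable (fun ω => B (t - h) ω * B (t + h) ω) P := aux_integrable_mul hA2 hD2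
    have iAB : Integrable (fun ω => B (t - h) ω * B t ω) P := aux_integrable_mul hA2 hB2'
    have i1 : Integrable (fun ω => B t ω * B (t + h) ω - B t ω * B t ω) P := iBD.sub iBB
    have i2 : Integrable (fun ω => B (t - h) ω * B (t + h) ω - B (t - h) ω * B t ω) P :=
      iAD.sub iAB
    have i3 : Integrable (fun ω => B (t + h) ω * B (t + h) ω - B (t + h) ω * B t ω) P :=
      iDD.sub iDB
    -- value of ∫ Z * X
    have hZXval : ∫ ω, Z ω * X ω ∂P = c * h^(2*H) / h := by
      have e : ∀ ω, Z ω * X ω =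
          (B t ω * B (t + h) ω - B t ω * B t ω
            - (B (t - h) ω * B (t + h) ω - B (t - h) ω * B t ω)) / h := by
        intro ω; simp only [hZ_def, hX_def]; ring
      rw [integral_congr_ae (Eventually.of_forall e), integral_div,
        integral_sub i1 i2, integral_sub iBD iBB, integral_sub iAD iAB,
        hbd, hbb, had, hab, h2h, hc_def]
      ring
    -- value of ∫ Z * Z
    have hZZval : ∫ ω, Z ω * Z ω ∂P = h^(2*H) := by
      have e : ∀ ω, Z ω * Z ω =
          B (t + h) ω * B (t + h) ω - B (t + h) ω * B t ω
            - (B t ω * B (t + h) ω - B t ω * B t ω) := by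
        intro ω; simp only [hZ_def]; ring
      rw [integral_congr_ae (Eventually.of_forall e),
        integral_sub i3 i1, integral_sub iDD iDB, integral_sub iBD iBB,
        hdd, hdb, hbd, hbb]
      ring
    -- ∫ condexp * Z = ∫ Z * X
    have hZX : Integrable (Z * X) P := aux_integrable_mul hZ2 hX2
    have hpull : P[Z * X|MeasurableSpace.comap (fun ω => (B t ω, B (t + h) ω)) inferInstance]
        =ᵐ[P] Z * P[X|MeasurableSpace.comap (fun ω => (B t ω, B (t + h) ω)) inferInstance] :=
      condExp_mul_of_stronglyMeasurable_left hZm hZX hXint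
    have hIeq : ∫ ω,
        (P[X|MeasurableSpace.comap (fun ω => (B t ω, B (t + h) ω)) inferInstance]) ω * Z ω ∂P
        = c * h^(2*H) / h := by
      have e1 : ∫ ω,
          (P[X|MeasurableSpace.comap (fun ω => (B t ω, B (t + h) ω)) inferInstance]) ω * Z ω ∂P
          = ∫ ω, (Z * P[X|MeasurableSpace.comap
              (fun ω => (B t ω, B (t + h) ω)) inferInstance]) ω ∂P := by
        refine integral_congr_ae (Eventually.of_forall fun ω => ?_)
        simp [mul_comm]
      have e2 : ∫ ω, (Z * P[X|MeasurableSpace.comap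
            (fun ω => (B t ω, B (t + h) ω)) inferInstance]) ω ∂P
          = ∫ ω, (P[Z * X|MeasurableSpace.comap
              (fun ω => (B t ω, B (t + h) ω)) inferInstance]) ω ∂P :=
        (integral_congr_ae hpull).symm
      have e3 : ∫ ω, (P[Z * X|MeasurableSpace.comap
            (fun ω => (B t ω, B (t + h) ω)) inferInstance]) ω ∂P
          = ∫ ω, (Z * X) ω ∂P := integral_condExp hm
      have e4 : ∫ ω, (Z * X) ω ∂P = ∫ ω, Z ω * X ω ∂P := by
        refine integral_congr_ae (Eventually.of_forall fun ω => ?_)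
        simp
      rw [e1, e2, e3, e4, hZXval]
    -- variance equals second moment
    have hVar : variance
        (P[X|MeasurableSpace.comap (fun ω => (B t ω, B (t + h) ω)) inferInstance]) P
        = ∫ ω, (P[X|MeasurableSpace.comap (fun ω => (B t ω, B (t + h) ω)) inferInstance]) ω
            * (P[X|MeasurableSpace.comap (fun ω => (B t ω, B (t + h) ω)) inferInstance]) ω ∂P := by
      rw [variance_eq_sub hf2, integral_condExp hm, hXmean]
      have e5 : ∫ ω, ((P[X|MeasurableSpace.comap
            (fun ω => (B t ω, B (t + h) ω)) inferInstance]) ^ 2) ω ∂P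
          = ∫ ω, (P[X|MeasurableSpace.comap (fun ω => (B t ω, B (t + h) ω)) inferInstance]) ω
            * (P[X|MeasurableSpace.comap (fun ω => (B t ω, B (t + h) ω)) inferInstance]) ω ∂P := by
        refine integral_congr_ae (Eventually.of_forall fun ω => ?_)
        simp [sq]
      rw [e5]
      ring
    rw [hVar]
    have hhp : (0:ℝ) < h^(2*H) := Real.rpow_pos_of_pos hh0 _
    have hCS' : (c * h^(2*H) / h)^2
        ≤ (∫ ω, (P[X|MeasurableSpace.comap (fun ω => (B t ω, B (t + h) ω)) inferInstance]) ω
            * (P[X|MeasurableSpace.comap (fun ω => (B t ω, B (t + h) ω)) inferInstance]) ω ∂P)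
          * h^(2*H) := by
      rw [← hIeq, ← hZZval]
      exact aux_cauchy_schwarz hf2 hZ2
    have e6 : (c * h^(2*H) / h)^2 = (c^2 * h^(2*H) / h^2) * h^(2*H) := by
      field_simp
    rw [e6] at hCS'
    exact le_of_mul_le_mul_right hCS' hhp
  -- the lower bound tends to infinity
  have hlim : Tendsto (fun h : ℝ => c^2 * h^(2*H) / h^2) (𝓝[>] 0) atTop := by
    have h1 : Tendsto (fun h : ℝ => h⁻¹ ^ (2 - 2*H)) (𝓝[>] 0) atTop :=
      (tendsto_rpow_atTop (by linarith)).comp tendsto_inv_nhdsGT_zero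
    have h2 : Tendsto (fun h : ℝ => c^2 * h⁻¹ ^ (2 - 2*H)) (𝓝[>] 0) atTop :=
      h1.const_mul_atTop (by positivity)
    refine h2.congr' ?_
    filter_upwards [self_mem_nhdsWithin] with h (hh : (0:ℝ) < h)
    have e : h ^ (2*H) / h^2 = h ^ (2*H - 2) := by
      rw [show (h:ℝ)^(2:ℕ) = h ^ ((2:ℕ):ℝ) from (Real.rpow_natCast h 2).symm,
        ← Real.rpow_sub hh]
      norm_num
    rw [Real.inv_rpow hh.le, ← Real.rpow_neg hh.le,
      show -(2-2*H) = 2*H-2 by ring, mul_div_assoc, e]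
  refine tendsto_atTop_mono' _ ?_ hlim
  filter_upwards [Ioo_mem_nhdsGT
    (show (0:ℝ) < min t (T - t) from lt_min ht0 (by linarith))] with h hh
  exact key h hh
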